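/- Fix N ∈ ℕ, N ≥ 2, and assume f : [0,1] × ℝ → ℝ satisfies D(f): there exist positive constants A, B with A < 1 such that |f(t,x)| ≤ A|x| + B for all t ∈ [0,1], x ∈ ℝ. Then the functional x ↦ ‖D_N x‖_N on 𝔼_N is coercive with respect to ‖·‖_{𝔼_N}; in fact ‖D_N x‖_N ≥ (1 − A)‖x‖_{𝔼_N} − B/N^{3/2} for every x ∈ 𝔼_N. -/

import Mathlib

/-- The space `𝔼_N` of functions `x : {0,…,N} → ℝ` with `x(0) = x(N) = 0` is identified
with `ℝ^{N−1}` via the interior values `x(1),…,x(N−1)`; `ext N x k` recovers `x(k)` for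
`k ∈ ℤ` (extending by `0` at the boundary and outside `{0,…,N}`).  With this
identification the Euclidean norm of `ℝ^{N−1}` is exactly `‖x‖_N`. -/
noncomputable def ext (N : ℕ) (x : EuclideanSpace ℝ (Fin (N-1))) (k : ℤ) : ℝ :=
  if h : 1 ≤ k ∧ k ≤ (N:ℤ) - 1 then x ⟨(k-1).toNat, by omega⟩ else 0

/-- The operator `D_N : 𝔼_N → 𝔼_N`,
`(D_N x)(k) = Δ²x(k−1) − (1/N²) f(k/N, x(k))` for `k = 1,…,N−1`
(and `0` at `k = 0, N`), written on interior indices `k = i + 1`, `i : Fin (N−1)`. -/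
noncomputable def DN (N : ℕ) (f : ℝ → ℝ → ℝ) (x : EuclideanSpace ℝ (Fin (N-1))) :
    EuclideanSpace ℝ (Fin (N-1)) :=
  WithLp.toLp 2 (fun i : Fin (N-1) => ext N x ((i:ℕ)+2) - 2 * ext N x ((i:ℕ)+1) + ext N x (i:ℕ)
    - (1/(N:ℝ)^2) * f ((((i:ℕ):ℝ)+1)/(N:ℝ)) (ext N x ((i:ℕ)+1)))

/-- `‖x‖_{𝔼_N} = (∑_{k=1}^{N−1} |Δ²x(k−1)|²)^{1/2}` in the identification of `𝔼_N`
with `ℝ^{N−1}` (interior index `k = i+1`). -/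
noncomputable def normEN (N : ℕ) (x : EuclideanSpace ℝ (Fin (N-1))) : ℝ :=
  Real.sqrt (∑ i : Fin (N-1),
    (ext N x ((i:ℕ)+2) - 2 * ext N x ((i:ℕ)+1) + ext N x (i:ℕ))^2)

lemma DN_bound_aux
    (n : ℕ) (hn : 1 ≤ n) (f : ℝ → ℝ → ℝ)
    (A B : ℝ) (hA : 0 < A) (hB : 0 < B) (hAlt : A < 1)
    (hgrowth : ∀ t ∈ Set.Icc (0:ℝ) 1, ∀ z : ℝ, |f t z| ≤ A * |z| + B)
    (x : EuclideanSpace ℝ (Fin (n+1-1))) :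
    (1 - A) * normEN (n+1) x - B / ((n+1:ℕ):ℝ)^((3:ℝ)/2) ≤ ‖DN (n+1) f x‖ := by
  classical
  set v : ℕ → ℝ := fun k => ext (n+1) x (k:ℤ) with hvdef
  have hv0 : v 0 = 0 := by
    show ext (n+1) x ((0:ℕ):ℤ) = 0
    rw [ext, dif_neg (by rintro ⟨h1, h2⟩; omega)]
  have hvN : v (n+1) = 0 := by
    show ext (n+1) x (((n+1:ℕ)):ℤ) = 0
    rw [ext, dif_neg (by rintro ⟨h1, h2⟩; omega)]
  have hvx : ∀ i : Fin (n+1-1), v ((i:ℕ)+1) = x i := by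
    intro i
    have hi : (i:ℕ) < n := by have := i.2; omega
    show ext (n+1) x (((i:ℕ)+1 : ℕ):ℤ) = x i
    rw [ext, dif_pos (by constructor <;> push_cast <;> omega)]
    exact congrArg (fun j => x j) (Fin.ext (by simp))
  -- cast bridges for arguments of ext appearing in DN / normEN
  have hcast0 : ∀ k : ℕ, ext (n+1) x ((k:ℕ):ℤ) = v k := fun k => rfl
  have hcast1 : ∀ k : ℕ, ext (n+1) x ((k:ℤ)+1) = v (k+1) := by
    intro k
    have h : ((k:ℤ)+1) = (((k+1:ℕ)):ℤ) := by push_cast; ring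
    show _ = ext (n+1) x (((k+1:ℕ)):ℤ)
    rw [h]
  have hcast2 : ∀ k : ℕ, ext (n+1) x ((k:ℤ)+2) = v (k+2) := by
    intro k
    have h : ((k:ℤ)+2) = (((k+2:ℕ)):ℤ) := by push_cast; ring
    show _ = ext (n+1) x (((k+2:ℕ)):ℤ)
    rw [h]
  -- abbreviations
  set D : ℝ := ∑ k ∈ Finset.range (n+1), (v (k+1) - v k)^2 with hD
  set Zs : ℝ := ∑ k ∈ Finset.range n, (v (k+2) - 2*v (k+1) + v k)^2 with hZs
  have hZsnn : 0 ≤ Zs := Finset.sum_nonneg fun k _ => sq_nonneg _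
  set Z : ℝ := Real.sqrt Zs with hZ
  have hZnn : 0 ≤ Z := Real.sqrt_nonneg _
  -- shifted sums
  have S1 : ∑ k ∈ Finset.range n, v (k+1) * v (k+2)
      = ∑ k ∈ Finset.range (n+1), v k * v (k+1) := by
    rw [Finset.sum_range_succ' (fun k => v k * v (k+1)) n]
    simp [hv0]
  have S2 : ∑ k ∈ Finset.range n, v k * v (k+1)
      = ∑ k ∈ Finset.range (n+1), v k * v (k+1) := by
    rw [Finset.sum_range_succ (fun k => v k * v (k+1)) n]
    simp [hvN]
  have S3 : ∑ k ∈ Finset.range n, v (k+1)^2 = ∑ k ∈ Finset.range (n+1), v k^2 := by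
    rw [Finset.sum_range_succ' (fun k => v k ^ 2) n]
    simp [hv0]
  have S4 : ∑ k ∈ Finset.range (n+1), v (k+1)^2 = ∑ k ∈ Finset.range (n+1), v k^2 := by
    have a := Finset.sum_range_succ' (fun k => v k ^ 2) (n+1)
    have b := Finset.sum_range_succ (fun k => v k ^ 2) (n+1)
    simp only [hv0, hvN] at a b
    rw [b] at a
    simpa using a.symm
  -- summation by parts
  have habel : D = -∑ k ∈ Finset.range n, v (k+1) * (v (k+2) - 2*v (k+1) + v k) := by
    have e1 : D = (∑ k ∈ Finset.range (n+1), v (k+1)^2)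
        - 2*(∑ k ∈ Finset.range (n+1), v k * v (k+1))
        + ∑ k ∈ Finset.range (n+1), v k^2 := by
      rw [hD]
      rw [Finset.sum_congr rfl
        (g := fun k => (v (k+1)^2 - 2*(v k * v (k+1)) + v k^2)) (fun k _ => by ring)]
      rw [Finset.sum_add_distrib, Finset.sum_sub_distrib, ← Finset.mul_sum]
    have e2 : ∑ k ∈ Finset.range n, v (k+1) * (v (k+2) - 2*v (k+1) + v k)
        = (∑ k ∈ Finset.range n, v (k+1) * v (k+2))
        - 2*(∑ k ∈ Finset.range n, v (k+1)^2)
        + ∑ k ∈ Finset.range n, v k * v (k+1) := by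
      rw [Finset.sum_congr rfl
        (g := fun k => (v (k+1) * v (k+2) - 2*(v (k+1)^2) + v k * v (k+1))) (fun k _ => by ring)]
      rw [Finset.sum_add_distrib, Finset.sum_sub_distrib, ← Finset.mul_sum]
    rw [e1, e2]
    linarith [S1, S2, S3, S4]
  -- ‖x‖ in terms of v
  have hXeq : ‖x‖^2 = ∑ k ∈ Finset.range n, v (k+1)^2 := by
    rw [EuclideanSpace.norm_eq, Real.sq_sqrt (Finset.sum_nonneg fun i _ => sq_nonneg _)]
    rw [show (∑ i : Fin (n+1-1), ‖x i‖^2) = ∑ i : Fin (n+1-1), v ((i:ℕ)+1)^2 from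
      Finset.sum_congr rfl fun i _ => by rw [hvx i, Real.norm_eq_abs, sq_abs]]
    rw [Fin.sum_univ_eq_sum_range (fun k => v (k+1)^2) (n+1-1)]
    simp
  have hXsqrt : Real.sqrt (∑ k ∈ Finset.range n, v (k+1)^2) = ‖x‖ := by
    rw [← hXeq, Real.sqrt_sq (norm_nonneg x)]
  -- pointwise Poincaré
  have hDnn : 0 ≤ D := Finset.sum_nonneg fun k _ => sq_nonneg _
  have hpoint : ∀ k, k ≤ n+1 → v k^2 ≤ (n+1 : ℝ) * D := by
    intro k hk
    have h1 : v k = ∑ j ∈ Finset.range k, (v (j+1) - v j) := by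
      rw [Finset.sum_range_sub v k, hv0, sub_zero]
    rw [h1]
    calc (∑ j ∈ Finset.range k, (v (j+1) - v j))^2
        ≤ (Finset.range k).card * ∑ j ∈ Finset.range k, (v (j+1) - v j)^2 :=
          sq_sum_le_card_mul_sum_sq
      _ ≤ (n+1 : ℝ) * D := by
          apply mul_le_mul
          · simp only [Finset.card_range]; exact_mod_cast hk
          · exact Finset.sum_le_sum_of_subset_of_nonneg
              (Finset.range_subset_range.2 hk) (fun j _ _ => sq_nonneg _)
          · exact Finset.sum_nonneg fun j _ => sq_nonneg _
          · positivity
  have hX2 : ‖x‖^2 ≤ ((n+1:ℝ))^2 * D := by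
    rw [hXeq]
    calc ∑ k ∈ Finset.range n, v (k+1)^2
        ≤ ∑ _k ∈ Finset.range n, (n+1:ℝ) * D :=
          Finset.sum_le_sum fun k hk => hpoint (k+1)
            (by have := Finset.mem_range.1 hk; omega)
      _ = (n:ℝ) * ((n+1:ℝ) * D) := by rw [Finset.sum_const, Finset.card_range]; ring
      _ ≤ ((n+1:ℝ))^2 * D := by nlinarith [hDnn]
  -- Cauchy–Schwarz
  have hCS : D ≤ ‖x‖ * Z := by
    rw [habel]
    have : -∑ k ∈ Finset.range n, v (k+1) * (v (k+2) - 2*v (k+1) + v k)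
        = ∑ k ∈ Finset.range n, (-(v (k+1))) * (v (k+2) - 2*v (k+1) + v k) := by
      rw [← Finset.sum_neg_distrib]
      exact Finset.sum_congr rfl fun k _ => by ring
    rw [this]
    calc ∑ k ∈ Finset.range n, (-(v (k+1))) * (v (k+2) - 2*v (k+1) + v k)
        ≤ Real.sqrt (∑ k ∈ Finset.range n, (-(v (k+1)))^2)
          * Real.sqrt (∑ k ∈ Finset.range n, (v (k+2) - 2*v (k+1) + v k)^2) :=
          Real.sum_mul_le_sqrt_mul_sqrt _ _ _
      _ = ‖x‖ * Z := by
          rw [hZ, hZs]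
          congr 1
          rw [← hXsqrt]
          congr 1
          exact Finset.sum_congr rfl fun k _ => by ring
  have hxZ : ‖x‖ ≤ ((n+1:ℝ))^2 * Z := by
    rcases eq_or_lt_of_le (norm_nonneg x) with h | h
    · rw [← h]; positivity
    · nlinarith [hX2, hCS, h]
  -- the vectors z and w
  set NR : ℝ := ((n+1:ℕ):ℝ) with hNR
  have hNRpos : 0 < NR := by rw [hNR]; positivity
  have hNReq : NR = (n:ℝ)+1 := by rw [hNR]; push_cast; ring
  set zv : EuclideanSpace ℝ (Fin (n+1-1)) :=
    WithLp.toLp 2 (fun i => v ((i:ℕ)+2) - 2*v ((i:ℕ)+1) + v (i:ℕ)) with hzv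
  set wv : EuclideanSpace ℝ (Fin (n+1-1)) :=
    WithLp.toLp 2 (fun i => (1/NR^2) * f ((((i:ℕ):ℝ)+1)/NR) (v ((i:ℕ)+1))) with hwv
  have hDNeq : DN (n+1) f x = zv - wv := by
    ext i
    rw [PiLp.sub_apply]
    show ext (n+1) x ((i:ℕ)+2) - 2 * ext (n+1) x ((i:ℕ)+1) + ext (n+1) x (i:ℕ)
      - (1/((n+1:ℕ):ℝ)^2) * f ((((i:ℕ):ℝ)+1)/((n+1:ℕ):ℝ)) (ext (n+1) x ((i:ℕ)+1)) = _
    rw [hcast1, hcast2, hcast0]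
  have hznorm : ‖zv‖ = Z := by
    rw [EuclideanSpace.norm_eq, hZ, hZs]
    congr 1
    rw [show (∑ i : Fin (n+1-1), ‖zv i‖^2)
        = ∑ i : Fin (n+1-1), (fun k => (v (k+2) - 2*v (k+1) + v k)^2) (i:ℕ) from
      Finset.sum_congr rfl fun i _ => by rw [hzv]; rw [Real.norm_eq_abs, sq_abs]]
    rw [Fin.sum_univ_eq_sum_range (fun k => (v (k+2) - 2*v (k+1) + v k)^2) (n+1-1)]
    simp
  -- bound on wv
  have hwpt : ∀ i : Fin (n+1-1), |wv i| ≤ (A/NR^2) * |v ((i:ℕ)+1)| + B/NR^2 := by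
    intro i
    have hi : (i:ℕ) < n := by have := i.2; omega
    have ht : (((i:ℕ):ℝ)+1)/NR ∈ Set.Icc (0:ℝ) 1 := by
      constructor
      · positivity
      · rw [div_le_one hNRpos, hNReq]
        push_cast
        linarith [show ((i:ℕ):ℝ) ≤ (n:ℝ) from by exact_mod_cast hi.le]
    have := hgrowth _ ht (v ((i:ℕ)+1))
    rw [hwv]
    calc |(1/NR^2) * f ((((i:ℕ):ℝ)+1)/NR) (v ((i:ℕ)+1))|
        = (1/NR^2) * |f ((((i:ℕ):ℝ)+1)/NR) (v ((i:ℕ)+1))| := by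
          rw [abs_mul, abs_of_nonneg (by positivity)]
      _ ≤ (1/NR^2) * (A * |v ((i:ℕ)+1)| + B) := by
          apply mul_le_mul_of_nonneg_left this (by positivity)
      _ = (A/NR^2) * |v ((i:ℕ)+1)| + B/NR^2 := by ring
  set pv : EuclideanSpace ℝ (Fin (n+1-1)) :=
    WithLp.toLp 2 (fun i => (A/NR^2) * |v ((i:ℕ)+1)|) with hpv
  set qv : EuclideanSpace ℝ (Fin (n+1-1)) := WithLp.toLp 2 (fun _ => B/NR^2) with hqv
  have hwpq : ‖wv‖ ≤ ‖pv + qv‖ := by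
    rw [EuclideanSpace.norm_eq, EuclideanSpace.norm_eq]
    apply Real.sqrt_le_sqrt
    apply Finset.sum_le_sum
    intro i _
    rw [PiLp.add_apply, Real.norm_eq_abs, Real.norm_eq_abs, sq_abs]
    have h1 := hwpt i
    have h2 : |pv i + qv i| = pv i + qv i := by
      rw [abs_of_nonneg]
      rw [hpv, hqv]
      positivity
    rw [h2]
    calc (wv i)^2 = |wv i|^2 := (sq_abs _).symm
      _ ≤ (pv i + qv i)^2 := by
          apply pow_le_pow_left₀ (abs_nonneg _)
          rw [hpv, hqv]; exact h1
  have hpnorm : ‖pv‖ = (A/NR^2) * ‖x‖ := by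
    rw [EuclideanSpace.norm_eq]
    rw [show (∑ i : Fin (n+1-1), ‖pv i‖^2)
        = ∑ i : Fin (n+1-1), (A/NR^2)^2 * (fun k => v (k+1)^2) (i:ℕ) from
      Finset.sum_congr rfl fun i _ => by
        rw [hpv, Real.norm_eq_abs, sq_abs, mul_pow, sq_abs]]
    rw [← Finset.mul_sum, Real.sqrt_mul (sq_nonneg _), Real.sqrt_sq (by positivity)]
    rw [Fin.sum_univ_eq_sum_range (fun k => v (k+1)^2) (n+1-1)]
    simp only [Nat.add_sub_cancel]
    rw [hXsqrt]
  have hqnorm : ‖qv‖ = (B/NR^2) * Real.sqrt n := by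
    rw [EuclideanSpace.norm_eq]
    rw [show (∑ i : Fin (n+1-1), ‖qv i‖^2) = ∑ _i : Fin (n+1-1), (B/NR^2)^2 from
      Finset.sum_congr rfl fun i _ => by rw [hqv, Real.norm_eq_abs, sq_abs]]
    rw [Finset.sum_const]
    simp only [Finset.card_univ, Fintype.card_fin, Nat.add_sub_cancel, nsmul_eq_mul]
    rw [Real.sqrt_mul (by positivity), Real.sqrt_sq (by positivity)]
    ring
  -- triangle inequality
  have hlow : Z - ‖wv‖ ≤ ‖DN (n+1) f x‖ := by
    rw [hDNeq, ← hznorm]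
    exact norm_sub_norm_le zv wv
  -- arithmetic to close
  have hA1 : (A/NR^2) * ‖x‖ ≤ A * Z := by
    have : ‖x‖ ≤ NR^2 * Z := by rw [hNReq]; exact hxZ
    calc (A/NR^2) * ‖x‖ ≤ (A/NR^2) * (NR^2 * Z) := by
          apply mul_le_mul_of_nonneg_left this (by positivity)
      _ = A * Z := by field_simp
  have hrpow : NR^((3:ℝ)/2) * Real.sqrt NR = NR^2 := by
    rw [Real.sqrt_eq_rpow, ← Real.rpow_add hNRpos]
    norm_num
  have hrpow_pos : 0 < NR^((3:ℝ)/2) := Real.rpow_pos_of_pos hNRpos _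
  have hA2 : (B/NR^2) * Real.sqrt n ≤ B / NR^((3:ℝ)/2) := by
    have h1 : Real.sqrt (n:ℝ) ≤ Real.sqrt NR := by
      apply Real.sqrt_le_sqrt
      rw [hNReq]; linarith
    calc (B/NR^2) * Real.sqrt n ≤ (B/NR^2) * Real.sqrt NR := by
          apply mul_le_mul_of_nonneg_left h1 (by positivity)
      _ = B / NR^((3:ℝ)/2) := by
          rw [← hrpow]
          field_simp
  have hZnormEN : normEN (n+1) x = Z := by
    rw [normEN, hZ, hZs]
    congr 1
    rw [show (∑ i : Fin (n+1-1),
        (ext (n+1) x ((i:ℕ)+2) - 2 * ext (n+1) x ((i:ℕ)+1) + ext (n+1) x (i:ℕ))^2)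
        = ∑ i : Fin (n+1-1), (fun k => (v (k+2) - 2*v (k+1) + v k)^2) (i:ℕ) from
      Finset.sum_congr rfl fun i _ => by rw [hcast1, hcast2, hcast0]]
    rw [Fin.sum_univ_eq_sum_range (fun k => (v (k+2) - 2*v (k+1) + v k)^2) (n+1-1)]
    simp
  rw [hZnormEN]
  have hw : ‖wv‖ ≤ A * Z + B / NR^((3:ℝ)/2) := by
    calc ‖wv‖ ≤ ‖pv + qv‖ := hwpq
      _ ≤ ‖pv‖ + ‖qv‖ := norm_add_le _ _
      _ = (A/NR^2) * ‖x‖ + (B/NR^2) * Real.sqrt n := by rw [hpnorm, hqnorm]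
      _ ≤ A * Z + B / NR^((3:ℝ)/2) := add_le_add hA1 hA2
  linarith [hlow, hw]


/-- Under D(f) (`|f(t,x)| ≤ A|x| + B` with `0 < A < 1`, `0 < B`), the functional
`x ↦ ‖D_N x‖_N` is coercive on `(𝔼_N, ‖·‖_{𝔼_N})`; in fact
`‖D_N x‖_N ≥ (1 − A)‖x‖_{𝔼_N} − B/N^{3/2}` for every `x ∈ 𝔼_N`.
(The Euclidean norm `‖D_N x‖` is exactly `‖D_N x‖_N`.) -/
theorem DN_norm_coercive
    (N : ℕ) (hN : 2 ≤ N) (f : ℝ → ℝ → ℝ)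
    (A B : ℝ) (hA : 0 < A) (hB : 0 < B) (hAlt : A < 1)
    (hgrowth : ∀ t ∈ Set.Icc (0:ℝ) 1, ∀ z : ℝ, |f t z| ≤ A * |z| + B) :
    (∀ M : ℝ, ∃ R : ℝ, ∀ x : EuclideanSpace ℝ (Fin (N-1)),
        R ≤ normEN N x → M ≤ ‖DN N f x‖) ∧
    ∀ x : EuclideanSpace ℝ (Fin (N-1)),
      (1 - A) * normEN N x - B / (N:ℝ)^((3:ℝ)/2) ≤ ‖DN N f x‖ := by
  obtain ⟨n, rfl⟩ : ∃ n, N = n + 1 := ⟨N-1, by omega⟩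
  have hn : 1 ≤ n := by omega
  have key := DN_bound_aux n hn f A B hA hB hAlt hgrowth
  constructor
  · intro M
    refine ⟨(M + B / ((n+1:ℕ):ℝ)^((3:ℝ)/2)) / (1 - A), fun x hx => ?_⟩
    have h1 : 0 < 1 - A := by linarith
    have h2 := key x
    have h3 : M + B / ((n+1:ℕ):ℝ)^((3:ℝ)/2) ≤ (1 - A) * normEN (n+1) x := by
      rw [← div_le_iff₀' h1] at *
      linarith [hx]
    linarith
  · exact key
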